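/- Let V be a finite index set, E a real inner product space, and w : V → E a family of vectors. Define f(A) = ‖Σ_{i∈A} w_i‖ and h(A,B) = ⟨Σ_{i∈A} w_i, Σ_{i∈B} w_i⟩. Assume nondegeneracy: f(A ∪ {j}) + f(A) > 0 for every finite A ⊆ V and every j ∉ A. For A ⊆ B ⊆ V and j ∉ B let γ(A,B,j) = (f(A ∪ {j}) + f(A)) / (f(B ∪ {j}) + f(B)). Then f is normalized (f(∅) = 0), monotone non-decreasing, and submodular if and only if both of the following hold: (i) for all A ⊆ B ⊆ V, h(B\A, B\A) + 2·h(A, B\A) ≥ 0; and (ii) for all A ⊆ B ⊆ V and all j ∉ B, h(A,{j}) ≥ (1/2)(γ(A,B,j) − 1)·h({j},{j}) + γ(A,B,j)·h(B,{j}). -/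

import Mathlib

open scoped RealInnerProductSpace

/-- Theorem 1, submodular conditions: under the nondegeneracy assumption,
`f` is normalized, monotone non-decreasing, and submodular iff conditions (i) and (ii) hold. -/
theorem submodular_conditions_iff
    {V : Type*} [Fintype V] [DecidableEq V]
    {E : Type*} [NormedAddCommGroup E] [InnerProductSpace ℝ E]
    (w : V → E)
    (f : Finset V → ℝ) (hf : ∀ A : Finset V, f A = ‖∑ i ∈ A, w i‖)
    (h : Finset V → Finset V → ℝ)
    (hh : ∀ A B : Finset V, h A B = ⟪∑ i ∈ A, w i, ∑ i ∈ B, w i⟫)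
    (hnondeg : ∀ (A : Finset V), ∀ j ∉ A, 0 < f (insert j A) + f A)
    (γ : Finset V → Finset V → V → ℝ)
    (hγ : ∀ (A B : Finset V) (j : V),
      γ A B j = (f (insert j A) + f A) / (f (insert j B) + f B)) :
    (f ∅ = 0 ∧
     (∀ A B : Finset V, A ⊆ B → f A ≤ f B) ∧
     (∀ A B : Finset V, A ⊆ B → ∀ j ∉ B,
        f (insert j B) - f B ≤ f (insert j A) - f A)) ↔
    ((∀ A B : Finset V, A ⊆ B → h (B \ A) (B \ A) + 2 * h A (B \ A) ≥ 0) ∧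
     (∀ A B : Finset V, A ⊆ B → ∀ j ∉ B,
        (1 / 2) * (γ A B j - 1) * h {j} {j} + γ A B j * h B {j} ≤ h A {j})) := by
  have mono_iff : ∀ A B : Finset V, A ⊆ B →
      (f A ≤ f B ↔ h (B \ A) (B \ A) + 2 * h A (B \ A) ≥ 0) := by
    intro A B hAB
    have hs : (∑ i ∈ B \ A, w i) + ∑ i ∈ A, w i = ∑ i ∈ B, w i := Finset.sum_sdiff hAB
    have key : f B ^ 2 = f A ^ 2 + (h (B \ A) (B \ A) + 2 * h A (B \ A)) := by
      rw [hf, hf, hh, hh, ← hs, norm_add_sq_real, real_inner_self_eq_norm_sq,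
        real_inner_comm (∑ i ∈ A, w i)]
      ring
    have h0A : 0 ≤ f A := by rw [hf]; positivity
    have h0B : 0 ≤ f B := by rw [hf]; positivity
    constructor
    · intro hle; nlinarith
    · intro hge; nlinarith
  have sub_iff : ∀ A B : Finset V, A ⊆ B → ∀ j ∉ B,
      ((f (insert j B) - f B ≤ f (insert j A) - f A) ↔
        (1 / 2) * (γ A B j - 1) * h {j} {j} + γ A B j * h B {j} ≤ h A {j}) := by
    intro A B hAB j hjB
    have hjA : j ∉ A := fun hjA => hjB (hAB hjA)
    have hDA := hnondeg A j hjA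
    have hDB := hnondeg B j hjB
    have keyA : f (insert j A) ^ 2 = f A ^ 2 + (h {j} {j} + 2 * h A {j}) := by
      rw [hf, hf, hh, hh, Finset.sum_insert hjA, Finset.sum_singleton, norm_add_sq_real,
        real_inner_self_eq_norm_sq, real_inner_comm (w j)]
      ring
    have keyB : f (insert j B) ^ 2 = f B ^ 2 + (h {j} {j} + 2 * h B {j}) := by
      rw [hf, hf, hh, hh, Finset.sum_insert hjB, Finset.sum_singleton, norm_add_sq_real,
        real_inner_self_eq_norm_sq, real_inner_comm (w j)]
      ring
    have eqA : f (insert j A) - f A = (h {j} {j} + 2 * h A {j}) / (f (insert j A) + f A) := by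
      rw [eq_div_iff hDA.ne']
      linear_combination keyA
    have eqB : f (insert j B) - f B = (h {j} {j} + 2 * h B {j}) / (f (insert j B) + f B) := by
      rw [eq_div_iff hDB.ne']
      linear_combination keyB
    have hgDB : γ A B j * (f (insert j B) + f B) = f (insert j A) + f A := by
      rw [hγ]; field_simp
    have step1 : (f (insert j B) - f B ≤ f (insert j A) - f A) ↔
        (h {j} {j} + 2 * h B {j}) * (f (insert j A) + f A) ≤
          (h {j} {j} + 2 * h A {j}) * (f (insert j B) + f B) := by
      rw [eqA, eqB, div_le_div_iff₀ hDB hDA]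
    have expand : ((1 / 2) * (γ A B j - 1) * h {j} {j} + γ A B j * h B {j}) *
        (f (insert j B) + f B) =
        (1 / 2) * ((f (insert j A) + f A) - (f (insert j B) + f B)) * h {j} {j} +
          (f (insert j A) + f A) * h B {j} := by
      linear_combination ((1 / 2) * h {j} {j} + h B {j}) * hgDB
    have step2 : ((1 / 2) * (γ A B j - 1) * h {j} {j} + γ A B j * h B {j} ≤ h A {j}) ↔
        (h {j} {j} + 2 * h B {j}) * (f (insert j A) + f A) ≤
          (h {j} {j} + 2 * h A {j}) * (f (insert j B) + f B) := by
      rw [← mul_le_mul_iff_of_pos_right hDB, expand]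
      constructor <;> intro hx <;> nlinarith [hx]
    exact step1.trans step2.symm
  constructor
  · rintro ⟨-, hm, hs⟩
    exact ⟨fun A B hAB => (mono_iff A B hAB).1 (hm A B hAB),
      fun A B hAB j hj => (sub_iff A B hAB j hj).1 (hs A B hAB j hj)⟩
  · rintro ⟨h1, h2⟩
    refine ⟨by rw [hf]; simp, fun A B hAB => (mono_iff A B hAB).2 (h1 A B hAB),
      fun A B hAB j hj => (sub_iff A B hAB j hj).2 (h2 A B hAB j hj)⟩
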